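/- Let x_1, …, x_n ∈ ℝ^d, b : ℕ → ℝ, and H be as in the multivariate learning setup (unit-norm data, b_0 ≥ 1, b_k ≥ 1/k² for k ≥ 1, Σ_k b_k < ∞, H positive definite). Let g(t) = Σ_k a_k t^k be a power series with auxiliary function g̃(t) = Σ_k |a_k| t^k, and let h be given by a multivariate power-series family with auxiliary function h̃, such that h̃(1) and h̃′(1) are finite and h̃(1) lies strictly inside the radius of convergence of g (so that g̃(h̃(1)), g̃′(h̃(1)), and g̃(h̃(0)) converge). Define y ∈ ℝⁿ by y_a = g(h(x_a)). Then √(yᵀ H⁻¹ y) ≤ g̃′(h̃(1)) h̃′(1) + g̃(h̃(0)). -/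

import Mathlib

open Matrix
open scoped RealInnerProductSpace

lemma pi_prod_tsum {ι : Type*} : ∀ (k : ℕ) (f : Fin k → ι → ℝ),
    (∀ i, Summable fun x => |f i x|) →
    (Summable fun T : Fin k → ι => |∏ i, f i (T i)|) ∧
    ((∑' T : Fin k → ι, ∏ i, f i (T i)) = ∏ i, ∑' x, f i x) := by
  intro k
  induction k with
  | zero =>
    intro f _
    have : Summable fun T : Fin 0 → ι => |∏ i, f i (T i)| := Summable.of_finite
    exact ⟨this, by simp⟩
  | succ k ih =>
    intro f hf
    obtain ⟨ihs, ihe⟩ := ih (fun i => f i.succ) (fun i => hf i.succ)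
    have hs0 : Summable fun x => ‖f 0 x‖ := by simpa only [Real.norm_eq_abs] using hf 0
    have hsP : Summable fun T : Fin k → ι => ‖∏ i, f i.succ (T i)‖ := by
      simpa only [Real.norm_eq_abs] using ihs
    have hgs := Summable.mul_norm hs0 hsP
    have hmul := tsum_mul_tsum_of_summable_norm hs0 hsP
    let e : (Fin (k+1) → ι) ≃ ι × (Fin k → ι) := (Fin.consEquiv (fun _ : Fin (k+1) => ι)).symm
    have hcomp : ∀ T : Fin (k+1) → ι, (∏ i, f i (T i)) = f 0 ((e T).1) * ∏ i, f i.succ ((e T).2 i) := by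
      intro T
      simp [e, Fin.consEquiv, Fin.prod_univ_succ, Fin.tail]
    have hgs' : Summable fun p : ι × (Fin k → ι) => |f 0 p.1 * ∏ i, f i.succ (p.2 i)| := by
      simpa only [Real.norm_eq_abs] using hgs
    constructor
    · have h3 := hgs'.comp_injective e.injective
      apply h3.congr
      intro T
      simp only [Function.comp_apply, hcomp T]
    · calc (∑' T : Fin (k+1) → ι, ∏ i, f i (T i))
          = ∑' T, f 0 ((e T).1) * ∏ i, f i.succ ((e T).2 i) := tsum_congr hcomp
        _ = ∑' p : ι × (Fin k → ι), f 0 p.1 * ∏ i, f i.succ (p.2 i) :=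
            e.tsum_eq (fun p => f 0 p.1 * ∏ i, f i.succ (p.2 i))
        _ = (∑' x, f 0 x) * ∏ i : Fin k, ∑' x, f i.succ x := by rw [← hmul, ihe]
        _ = ∏ i : Fin (k+1), ∑' x, f i x := (Fin.prod_univ_succ (fun i => ∑' x, f i x)).symm

lemma Q_eq {n d : ℕ} (x : Fin n → EuclideanSpace ℝ (Fin d)) (u : Fin n → ℝ)
    (ι : Type*) [Fintype ι] [DecidableEq ι] :
    ∑ c, ∑ c', u c * u c' * ⟪x c, x c'⟫ ^ (Fintype.card ι)
      = ∑ j : ι → Fin d, (∑ c, u c * ∏ i, x c (j i)) ^ 2 := by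
  classical
  have hinner : ∀ c c' : Fin n, (⟪x c, x c'⟫ : ℝ) = ∑ l, x c l * x c' l := by
    intro c c'
    simp [PiLp.inner_apply, RCLike.inner_apply, mul_comm]
  have key : ∀ c c' : Fin n,
      ∑ j : ι → Fin d, (∏ i, x c (j i)) * (∏ i, x c' (j i)) = ⟪x c, x c'⟫ ^ (Fintype.card ι) := by
    intro c c'
    have h1 : ∀ j : ι → Fin d, (∏ i, x c (j i)) * (∏ i, x c' (j i)) = ∏ i, (x c (j i) * x c' (j i)) := by
      intro j; rw [Finset.prod_mul_distrib]
    simp_rw [h1]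
    have h2 := Finset.prod_univ_sum (fun _ : ι => (Finset.univ : Finset (Fin d)))
      (fun _ l => x c l * x c' l)
    rw [Fintype.piFinset_univ] at h2
    rw [← h2, hinner c c']
    rw [Finset.prod_const, Finset.card_univ]
  calc ∑ c, ∑ c', u c * u c' * ⟪x c, x c'⟫ ^ (Fintype.card ι)
      = ∑ c, ∑ c', ∑ j : ι → Fin d, (u c * ∏ i, x c (j i)) * (u c' * ∏ i, x c' (j i)) := by
        refine Finset.sum_congr rfl fun c _ => Finset.sum_congr rfl fun c' _ => ?_
        rw [← key c c', Finset.mul_sum]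
        refine Finset.sum_congr rfl fun j _ => by ring
    _ = ∑ c, ∑ j : ι → Fin d, ∑ c', (u c * ∏ i, x c (j i)) * (u c' * ∏ i, x c' (j i)) := by
        exact Finset.sum_congr rfl fun c _ => Finset.sum_comm
    _ = ∑ j : ι → Fin d, ∑ c, ∑ c', (u c * ∏ i, x c (j i)) * (u c' * ∏ i, x c' (j i)) := by
        exact Finset.sum_comm
    _ = ∑ j : ι → Fin d, (∑ c, u c * ∏ i, x c (j i)) ^ 2 := by
        refine Finset.sum_congr rfl fun j _ => ?_
        rw [sq, Finset.sum_mul_sum]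

lemma monomial_bound {n d : ℕ} (x : Fin n → EuclideanSpace ℝ (Fin d)) (u : Fin n → ℝ)
    (ι : Type*) [Fintype ι] [DecidableEq ι] (γ : ι → EuclideanSpace ℝ (Fin d)) :
    |∑ c, u c * ∏ i, ⟪γ i, x c⟫| ≤ (∏ i, ‖γ i‖) *
      Real.sqrt (∑ c, ∑ c', u c * u c' * ⟪x c, x c'⟫ ^ (Fintype.card ι)) := by
  classical
  set S : (ι → Fin d) → ℝ := fun j => ∑ c, u c * ∏ i, x c (j i) with hS
  set T : (ι → Fin d) → ℝ := fun j => ∏ i, γ i (j i) with hT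
  have hexp : ∀ c, (∏ i, (⟪γ i, x c⟫ : ℝ)) = ∑ j : ι → Fin d, T j * ∏ i, x c (j i) := by
    intro c
    have h0 : ∀ i : ι, (⟪γ i, x c⟫ : ℝ) = ∑ l, γ i l * x c l := by
      intro i; simp [PiLp.inner_apply, RCLike.inner_apply, mul_comm]
    simp_rw [h0]
    have h2 := Finset.prod_univ_sum (fun _ : ι => (Finset.univ : Finset (Fin d)))
      (fun i l => γ i l * x c l)
    rw [Fintype.piFinset_univ] at h2
    rw [h2]
    exact Finset.sum_congr rfl fun j _ => by rw [hT, ← Finset.prod_mul_distrib]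
  have hmain : (∑ c, u c * ∏ i, (⟪γ i, x c⟫ : ℝ)) = ∑ j : ι → Fin d, T j * S j := by
    simp_rw [hexp, Finset.mul_sum]
    rw [Finset.sum_comm]
    refine Finset.sum_congr rfl fun j _ => ?_
    rw [hS, Finset.mul_sum]
    exact Finset.sum_congr rfl fun c _ => by ring
  have hcs := Finset.sum_mul_sq_le_sq_mul_sq Finset.univ T S
  have hT2 : ∑ j, T j ^ 2 = ∏ i, ‖γ i‖ ^ 2 := by
    have h3 : ∀ j : ι → Fin d, T j ^ 2 = ∏ i, (γ i (j i) * γ i (j i)) := by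
      intro j; show (∏ i, γ i (j i)) ^ 2 = _; rw [sq, ← Finset.prod_mul_distrib]
    simp_rw [h3]
    have h2 := Finset.prod_univ_sum (fun _ : ι => (Finset.univ : Finset (Fin d)))
      (fun i l => γ i l * γ i l)
    rw [Fintype.piFinset_univ] at h2
    rw [← h2]
    refine Finset.prod_congr rfl fun i _ => ?_
    have : (∑ l, γ i l * γ i l) = ⟪γ i, γ i⟫ := by
      simp only [PiLp.inner_apply, RCLike.inner_apply, conj_trivial]
    rw [this, real_inner_self_eq_norm_sq]
  have hS2 : ∑ j, S j ^ 2 = ∑ c, ∑ c', u c * u c' * ⟪x c, x c'⟫ ^ (Fintype.card ι) :=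
    (Q_eq x u ι).symm
  rw [hmain]
  have habs : |∑ j, T j * S j| = Real.sqrt ((∑ j, T j * S j) ^ 2) := (Real.sqrt_sq_eq_abs _).symm
  rw [habs]
  have h5 : ((∑ j, T j * S j) ^ 2) ≤ (∏ i, ‖γ i‖ ^ 2) * (∑ c, ∑ c', u c * u c' * ⟪x c, x c'⟫ ^ (Fintype.card ι)) := by
    rw [← hT2, ← hS2]; exact hcs
  calc Real.sqrt ((∑ j, T j * S j) ^ 2) ≤ Real.sqrt ((∏ i, ‖γ i‖ ^ 2) * (∑ c, ∑ c', u c * u c' * ⟪x c, x c'⟫ ^ (Fintype.card ι))) :=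
        Real.sqrt_le_sqrt h5
    _ = (∏ i, ‖γ i‖) * Real.sqrt (∑ c, ∑ c', u c * u c' * ⟪x c, x c'⟫ ^ (Fintype.card ι)) := by
        rw [Real.sqrt_mul (by positivity)]
        congr 1
        rw [Finset.prod_pow]
        exact Real.sqrt_sq (by positivity)

lemma summable_k_mul_pow {q : ℝ} (h0 : 0 ≤ q) (h1 : q < 1) :
    Summable (fun k : ℕ => (k : ℝ) * q ^ (k - 1)) := by
  rw [← summable_nat_add_iff 1]
  have h2 : Summable (fun k : ℕ => ((k : ℝ) ^ 1) * q ^ k) :=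
    summable_pow_mul_geometric_of_norm_lt_one 1 (by rw [Real.norm_eq_abs, abs_of_nonneg h0]; exact h1)
  have h3 : Summable (fun k : ℕ => q ^ k) := summable_geometric_of_lt_one h0 h1
  have h4 := h2.add h3
  apply h4.congr
  intro k
  simp only [Nat.add_sub_cancel, pow_one]
  push_cast
  ring

/-- The `k`-th auxiliary coefficient `ãₖ = ∑_v |a_{k,v}| ∏ᵢ ‖β_{k,v,i}‖` of a
multivariate power-series family. -/
noncomputable def auxCoef (d : ℕ) (a : ℕ → ℕ → ℝ)
    (β : (k : ℕ) → ℕ → Fin k → EuclideanSpace ℝ (Fin d)) (k : ℕ) : ℝ :=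
  ∑' v : ℕ, |a k v| * ∏ i : Fin k, ‖β k v i‖

/-- The function `x ↦ ∑_k ∑_v a_{k,v} ∏ᵢ ⟪β_{k,v,i}, x⟫` represented by a
multivariate power-series family. -/
noncomputable def familyFun (d : ℕ) (a : ℕ → ℕ → ℝ)
    (β : (k : ℕ) → ℕ → Fin k → EuclideanSpace ℝ (Fin d))
    (x : EuclideanSpace ℝ (Fin d)) : ℝ :=
  ∑' k : ℕ, ∑' v : ℕ, a k v * ∏ i : Fin k, ⟪β k v i, x⟫

/-- **Chain rule for learning bounds.**
If `g(t) = ∑ aₖ tᵏ` is analytic, `h` is given by a multivariate power-series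
family with auxiliary function `h̃` (with `h̃(1)`, `h̃′(1)` finite and `h̃(1)`
strictly inside the radius of convergence of `g`), and `y_c = g(h(x_c))`, then
`√(yᵀ H⁻¹ y) ≤ g̃′(h̃(1)) h̃′(1) + g̃(h̃(0))`. -/
theorem stmt8 (n d : ℕ) (x : Fin n → EuclideanSpace ℝ (Fin d))
    (hx : ∀ a, ‖x a‖ = 1)
    (b : ℕ → ℝ) (hb0 : 1 ≤ b 0) (hbk : ∀ k : ℕ, 1 ≤ k → 1 / (k : ℝ) ^ 2 ≤ b k)
    (hb_sum : Summable b)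
    (H : Matrix (Fin n) (Fin n) ℝ)
    (hH : ∀ a c, H a c = ∑' k : ℕ, b k * ⟪x a, x c⟫ ^ k)
    (hHpd : H.PosDef)
    (a : ℕ → ℝ)
    (ah : ℕ → ℕ → ℝ) (βh : (k : ℕ) → ℕ → Fin k → EuclideanSpace ℝ (Fin d))
    (hauxh : ∀ k : ℕ, Summable (fun v : ℕ => |ah k v| * ∏ i : Fin k, ‖βh k v i‖))
    (hh1 : Summable (fun k : ℕ => auxCoef d ah βh k))
    (hh1' : Summable (fun k : ℕ => (k : ℝ) * auxCoef d ah βh k))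
    (hR : ∃ r : ℝ, (∑' k : ℕ, auxCoef d ah βh k) < r ∧
      Summable (fun k : ℕ => |a k| * r ^ k))
    (y : Fin n → ℝ)
    (hy : ∀ c, y c = ∑' k : ℕ, a k * (familyFun d ah βh (x c)) ^ k) :
    Real.sqrt (y ⬝ᵥ (H⁻¹ *ᵥ y)) ≤
      (∑' k : ℕ, (k : ℝ) * |a k| * (∑' j : ℕ, auxCoef d ah βh j) ^ (k - 1)) *
        (∑' k : ℕ, (k : ℝ) * auxCoef d ah βh k) +
      ∑' k : ℕ, |a k| * (auxCoef d ah βh 0) ^ k := by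
  classical
  obtain ⟨r, hrlt, hr2⟩ := hR
  -- basic nonnegativity
  have haux_nonneg : ∀ k, 0 ≤ auxCoef d ah βh k := by
    intro k
    exact tsum_nonneg (fun v => mul_nonneg (abs_nonneg _) (Finset.prod_nonneg fun i _ => norm_nonneg _))
  set h1t : ℝ := ∑' j : ℕ, auxCoef d ah βh j with hh1t
  set h1t' : ℝ := ∑' k : ℕ, (k : ℝ) * auxCoef d ah βh k with hh1t'
  have h1t_nonneg : 0 ≤ h1t := tsum_nonneg (fun k => haux_nonneg k)
  have h1t'_nonneg : 0 ≤ h1t' := tsum_nonneg (fun k => mul_nonneg (Nat.cast_nonneg k) (haux_nonneg k))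
  have hr_pos : 0 < r := lt_of_le_of_lt h1t_nonneg hrlt
  set M : ℝ := (∑' k : ℕ, (k : ℝ) * |a k| * h1t ^ (k - 1)) * h1t' +
      ∑' k : ℕ, |a k| * (auxCoef d ah βh 0) ^ k with hM
  -- the vector u and the quadratic form
  set u : Fin n → ℝ := H⁻¹ *ᵥ y with hu
  set s : ℝ := y ⬝ᵥ (H⁻¹ *ᵥ y) with hs
  have hy_eq : H *ᵥ u = y := by
    rw [hu, Matrix.mulVec_mulVec, Matrix.mul_nonsing_inv _ (isUnit_iff_ne_zero.mpr hHpd.det_pos.ne'), Matrix.one_mulVec]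
  -- s as a double sum
  have hs_eq : s = ∑ c, ∑ c', u c * u c' * H c c' := by
    have h0 : s = (H *ᵥ u) ⬝ᵥ u := by rw [hy_eq, hs, hu]
    rw [h0]
    simp only [dotProduct, Matrix.mulVec]
    refine Finset.sum_congr rfl fun c _ => ?_
    rw [Finset.sum_mul]
    exact Finset.sum_congr rfl fun c' _ => by ring
  -- Q m and its properties
  set Q : ℕ → ℝ := fun m => ∑ c, ∑ c', u c * u c' * ⟪x c, x c'⟫ ^ m with hQ
  have hQm_nonneg : ∀ m, 0 ≤ Q m := by
    intro m
    have hqe := Q_eq x u (Fin m)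
    rw [Fintype.card_fin] at hqe
    show (0:ℝ) ≤ ∑ c, ∑ c', u c * u c' * ⟪x c, x c'⟫ ^ m
    rw [hqe]
    positivity
  have hb_nonneg : ∀ k, 0 ≤ b k := by
    intro k
    rcases Nat.eq_zero_or_pos k with h | h
    · subst h; linarith
    · have := hbk k h
      have : (0:ℝ) < 1 / (k:ℝ)^2 := by positivity
      linarith [hbk k h]
  have hip_le : ∀ c c' : Fin n, |(⟪x c, x c'⟫ : ℝ)| ≤ 1 := by
    intro c c'
    have := abs_real_inner_le_norm (x c) (x c')
    rwa [hx c, hx c', mul_one] at this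
  have hsummbQ : ∀ c c' : Fin n, Summable (fun k => b k * ⟪x c, x c'⟫ ^ k) := by
    intro c c'
    apply Summable.of_abs
    apply hb_sum.of_nonneg_of_le (fun k => abs_nonneg _)
    intro k
    rw [abs_mul, abs_of_nonneg (hb_nonneg k), abs_pow]
    calc b k * |⟪x c, x c'⟫| ^ k ≤ b k * 1 := by
          apply mul_le_mul_of_nonneg_left _ (hb_nonneg k)
          exact pow_le_one₀ (abs_nonneg _) (hip_le c c')
      _ = b k := mul_one _
  have hident : ∀ k : ℕ, ∑ c, ∑ c', u c * u c' * (b k * ⟪x c, x c'⟫ ^ k) = b k * Q k := by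
    intro k
    show _ = b k * ∑ c, ∑ c', u c * u c' * ⟪x c, x c'⟫ ^ k
    rw [Finset.mul_sum]
    refine Finset.sum_congr rfl fun c _ => ?_
    rw [Finset.mul_sum]
    exact Finset.sum_congr rfl fun c' _ => by ring
  have hS_tsum : s = ∑' m : ℕ, b m * Q m := by
    rw [hs_eq]
    have step1 : ∀ c c' : Fin n, u c * u c' * H c c'
        = ∑' k : ℕ, u c * u c' * (b k * ⟪x c, x c'⟫ ^ k) := by
      intro c c'
      rw [hH c c', tsum_mul_left]
    calc ∑ c, ∑ c', u c * u c' * H c c'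
        = ∑ c, ∑ c', ∑' k : ℕ, u c * u c' * (b k * ⟪x c, x c'⟫ ^ k) := by
          exact Finset.sum_congr rfl fun c _ => Finset.sum_congr rfl fun c' _ => step1 c c'
      _ = ∑ c, ∑' k : ℕ, ∑ c', u c * u c' * (b k * ⟪x c, x c'⟫ ^ k) := by
          refine Finset.sum_congr rfl fun c _ => ?_
          exact (Summable.tsum_finsetSum (fun c' _ => ((hsummbQ c c').mul_left _))).symm
      _ = ∑' k : ℕ, ∑ c, ∑ c', u c * u c' * (b k * ⟪x c, x c'⟫ ^ k) := by
          refine (Summable.tsum_finsetSum (fun c _ => ?_)).symm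
          exact summable_sum (fun c' _ => ((hsummbQ c c').mul_left _))
      _ = ∑' m : ℕ, b m * Q m := tsum_congr hident
  have hsummbQQ : Summable (fun k : ℕ => b k * Q k) := by
    have h2 : Summable (fun k : ℕ => ∑ c, ∑ c', u c * u c' * (b k * ⟪x c, x c'⟫ ^ k)) :=
      summable_sum (fun c _ => summable_sum (fun c' _ => ((hsummbQ c c').mul_left _)))
    exact h2.congr hident
  have hbQ_le : ∀ m, b m * Q m ≤ s := by
    intro m
    rw [hS_tsum]
    exact Summable.le_tsum hsummbQQ m (fun j _ => mul_nonneg (hb_nonneg j) (hQm_nonneg j))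
  have hs_nonneg : 0 ≤ s := by
    rw [hS_tsum]
    exact tsum_nonneg (fun m => mul_nonneg (hb_nonneg m) (hQm_nonneg m))
  -- sqrt Q bound
  have hsqrtQ : ∀ m : ℕ, Real.sqrt (Q m) ≤ ((m : ℝ) + if m = 0 then 1 else 0) * Real.sqrt s := by
    intro m
    have hcf_nonneg : (0:ℝ) ≤ (m : ℝ) + if m = 0 then 1 else 0 := by
      have : (0:ℝ) ≤ (m:ℝ) := Nat.cast_nonneg m
      split <;> norm_num <;> positivity
    have h1 : Q m ≤ ((m : ℝ) + if m = 0 then 1 else 0) ^ 2 * s := by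
      rcases Nat.eq_zero_or_pos m with h | h
      · subst h
        have h2 := hbQ_le 0
        have h3 := hQm_nonneg 0
        norm_num
        nlinarith [hb0]
      · have h2 := hbQ_le m
        have h3 := hQm_nonneg m
        have h4 := hbk m h
        have h5 : (0:ℝ) < (m:ℝ) ^ 2 := by positivity
        have h6 : (1 / (m:ℝ) ^ 2) * Q m ≤ s := le_trans (by nlinarith) h2
        have hne : m ≠ 0 := Nat.pos_iff_ne_zero.mp h
        rw [if_neg hne, add_zero]
        calc Q m = (m:ℝ)^2 * ((1 / (m:ℝ)^2) * Q m) := by field_simp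
          _ ≤ (m:ℝ)^2 * s := by
              apply mul_le_mul_of_nonneg_left h6 (le_of_lt h5)
    calc Real.sqrt (Q m) ≤ Real.sqrt (((m : ℝ) + if m = 0 then 1 else 0) ^ 2 * s) :=
          Real.sqrt_le_sqrt h1
      _ = ((m : ℝ) + if m = 0 then 1 else 0) * Real.sqrt s := by
          rw [Real.sqrt_mul (by positivity), Real.sqrt_sq hcf_nonneg]
  -- mass functions
  set mass : ℕ × ℕ → ℝ := fun p => |ah p.1 p.2| * ∏ i : Fin p.1, ‖βh p.1 p.2 i‖ with hmassdef
  have hmass_nonneg : ∀ p, 0 ≤ mass p := fun p =>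
    mul_nonneg (abs_nonneg _) (Finset.prod_nonneg fun i _ => norm_nonneg _)
  have hmass_summable : Summable mass := by
    rw [summable_prod_of_nonneg (fun p => hmass_nonneg p)]
    exact ⟨fun k => hauxh k, hh1.congr (fun k => rfl)⟩
  have hmass_tsum : ∑' p, mass p = h1t := by
    rw [Summable.tsum_prod' hmass_summable (fun k => hauxh k)]
    rfl
  -- the function F
  set F : Fin n → ℕ × ℕ → ℝ := fun c p => ah p.1 p.2 * ∏ i : Fin p.1, ⟪βh p.1 p.2 i, x c⟫
    with hFdef
  have hF_le : ∀ c p, |F c p| ≤ mass p := by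
    intro c p
    show |ah p.1 p.2 * ∏ i : Fin p.1, ⟪βh p.1 p.2 i, x c⟫| ≤
      |ah p.1 p.2| * ∏ i : Fin p.1, ‖βh p.1 p.2 i‖
    rw [abs_mul]
    apply mul_le_mul_of_nonneg_left _ (abs_nonneg _)
    rw [Finset.abs_prod]
    apply Finset.prod_le_prod (fun i _ => abs_nonneg _)
    intro i _
    have h7 := abs_real_inner_le_norm (βh p.1 p.2 i) (x c)
    rwa [hx c, mul_one] at h7
  have hF_abs_summable : ∀ c, Summable (fun p => |F c p|) :=
    fun c => hmass_summable.of_nonneg_of_le (fun p => abs_nonneg _) (fun p => hF_le c p)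
  have hF_summable : ∀ c, Summable (F c) := fun c => (hF_abs_summable c).of_abs
  have hF_slice : ∀ (c : Fin n) (k : ℕ), Summable (fun v => F c (k, v)) := by
    intro c k
    apply Summable.of_abs
    apply (hauxh k).of_nonneg_of_le (fun v => abs_nonneg _)
    intro v
    exact hF_le c (k, v)
  have hfam : ∀ c, familyFun d ah βh (x c) = ∑' p, F c p := by
    intro c
    rw [Summable.tsum_prod' (hF_summable c) (fun k => hF_slice c k)]
    rfl
  have hfam_le : ∀ c, |familyFun d ah βh (x c)| ≤ h1t := by
    intro c
    rw [hfam c, ← hmass_tsum, ← Real.norm_eq_abs]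
    calc ‖∑' p, F c p‖ ≤ ∑' p, ‖F c p‖ := norm_tsum_le_tsum_norm
          ((hF_abs_summable c).congr (fun p => (Real.norm_eq_abs _).symm))
      _ ≤ ∑' p, mass p := by
          apply Summable.tsum_le_tsum _ ((hF_abs_summable c).congr
            (fun p => (Real.norm_eq_abs _).symm)) hmass_summable
          intro p
          rw [Real.norm_eq_abs]
          exact hF_le c p
  -- mass with degree weight
  set massd : ℕ × ℕ → ℝ := fun p => (p.1 : ℝ) * mass p with hmassddef
  have hmassd_nonneg : ∀ p, 0 ≤ massd p :=
    fun p => mul_nonneg (Nat.cast_nonneg _) (hmass_nonneg p)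
  have hmassd_summable : Summable massd := by
    rw [summable_prod_of_nonneg (fun p => hmassd_nonneg p)]
    constructor
    · intro k
      show Summable fun v => massd (k, v)
      simp only [hmassddef, hmassdef]
      exact (hauxh k).mul_left _
    · apply hh1'.congr
      intro k
      show (k : ℝ) * auxCoef d ah βh k = ∑' v, massd (k, v)
      simp only [hmassddef, hmassdef]
      rw [tsum_mul_left]
      rfl
  have hmassd_slice : ∀ k : ℕ, Summable fun v => massd (k, v) := by
    intro k
    simp only [hmassddef, hmassdef]
    exact (hauxh k).mul_left _
  have hmassd_tsum : ∑' p, massd p = h1t' := by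
    rw [Summable.tsum_prod' hmassd_summable hmassd_slice, hh1t']
    apply tsum_congr
    intro k
    show (∑' v, massd (k, v)) = (k : ℝ) * auxCoef d ah βh k
    simp only [hmassddef, hmassdef]
    rw [tsum_mul_left]
    rfl
  -- mass restricted to degree zero
  set mass0 : ℕ × ℕ → ℝ := fun p => if p.1 = 0 then mass p else 0 with hmass0def
  have hmass0_nonneg : ∀ p, 0 ≤ mass0 p := by
    intro p
    show (0:ℝ) ≤ if p.1 = 0 then mass p else 0
    split
    · exact hmass_nonneg p
    · exact le_rfl
  have hmass0_le : ∀ p, mass0 p ≤ mass p := by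
    intro p
    show (if p.1 = 0 then mass p else 0) ≤ mass p
    split
    · exact le_rfl
    · exact hmass_nonneg p
  have hmass0_summable : Summable mass0 :=
    hmass_summable.of_nonneg_of_le (fun p => hmass0_nonneg p) (fun p => hmass0_le p)
  have hmass0_slice : ∀ k : ℕ, Summable (fun v => mass0 (k, v)) := by
    intro k
    rcases Nat.eq_zero_or_pos k with h | h
    · subst h
      apply (hauxh 0).congr
      intro v
      simp [hmass0def, hmassdef]
    · have hk : k ≠ 0 := Nat.pos_iff_ne_zero.mp h
      apply summable_zero.congr
      intro v
      simp [hmass0def, hk]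
  have hmass0_tsum : ∑' p, mass0 p = auxCoef d ah βh 0 := by
    rw [Summable.tsum_prod' hmass0_summable hmass0_slice]
    have hz : ∀ j : ℕ, j ≠ 0 → (∑' v, mass0 (j, v)) = 0 := by
      intro j hj
      have h8 : ∀ v : ℕ, mass0 (j, v) = 0 := fun v => by simp [hmass0def, hj]
      simp [h8]
    rw [tsum_eq_single 0 hz]
    exact tsum_congr fun v => by simp [hmass0def, hmassdef, auxCoef]

  have habs_mass : Summable fun p => |mass p| :=
    hmass_summable.congr fun p => (abs_of_nonneg (hmass_nonneg p)).symm
  have habs_massd : Summable fun p => |massd p| :=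
    hmassd_summable.congr fun p => (abs_of_nonneg (hmassd_nonneg p)).symm
  have habs_mass0 : Summable fun p => |mass0 p| :=
    hmass0_summable.congr fun p => (abs_of_nonneg (hmass0_nonneg p)).symm
  have hprod_mass : ∀ k : ℕ,
      (Summable fun T : Fin k → ℕ × ℕ => |∏ i, mass (T i)|) ∧
      (∑' T : Fin k → ℕ × ℕ, ∏ i, mass (T i)) = h1t ^ k := by
    intro k
    obtain ⟨hsum, heq⟩ := pi_prod_tsum k (fun _ => mass) (fun _ => habs_mass)
    refine ⟨hsum, ?_⟩
    rw [heq, Finset.prod_const, Finset.card_univ, Fintype.card_fin, hmass_tsum]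
  have hprod_mass0 : ∀ k : ℕ,
      (Summable fun T : Fin k → ℕ × ℕ => |∏ i, mass0 (T i)|) ∧
      (∑' T : Fin k → ℕ × ℕ, ∏ i, mass0 (T i)) = (auxCoef d ah βh 0) ^ k := by
    intro k
    obtain ⟨hsum, heq⟩ := pi_prod_tsum k (fun _ => mass0) (fun _ => habs_mass0)
    refine ⟨hsum, ?_⟩
    rw [heq, Finset.prod_const, Finset.card_univ, Fintype.card_fin, hmass0_tsum]
  have hdeg : ∀ k : ℕ,
      (Summable fun T : Fin k → ℕ × ℕ => (∑ i, ((T i).1 : ℝ)) * ∏ i, mass (T i)) ∧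
      (∑' T : Fin k → ℕ × ℕ, (∑ i, ((T i).1 : ℝ)) * ∏ i, mass (T i))
        = (k : ℝ) * (h1t' * h1t ^ (k - 1)) := by
    intro k
    have key : ∀ i₀ : Fin k,
        (Summable fun T : Fin k → ℕ × ℕ => ∏ i, (if i = i₀ then massd else mass) (T i)) ∧
        (∑' T : Fin k → ℕ × ℕ, ∏ i, (if i = i₀ then massd else mass) (T i))
          = h1t' * h1t ^ (k - 1) := by
      intro i₀
      obtain ⟨hsum, heq⟩ := pi_prod_tsum k (fun i => if i = i₀ then massd else mass)
        (fun i => by by_cases h : i = i₀ <;> simp [h, habs_massd, habs_mass])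
      refine ⟨hsum.of_abs, ?_⟩
      rw [heq]
      have hval : ∀ i : Fin k,
          (∑' p, (if i = i₀ then massd else mass) p) = if i = i₀ then h1t' else h1t := by
        intro i
        by_cases h : i = i₀ <;> simp [h, hmassd_tsum, hmass_tsum]
      rw [Finset.prod_congr rfl (fun i _ => hval i)]
      rw [← Finset.mul_prod_erase Finset.univ _ (Finset.mem_univ i₀), if_pos rfl]
      congr 1
      rw [Finset.prod_congr rfl (fun i hi => if_neg (Finset.ne_of_mem_erase hi)),
        Finset.prod_const, Finset.card_erase_of_mem (Finset.mem_univ i₀),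
        Finset.card_univ, Fintype.card_fin]
    have hpt : ∀ T : Fin k → ℕ × ℕ,
        (∑ i, ((T i).1 : ℝ)) * ∏ i, mass (T i)
          = ∑ i₀, ∏ i, (if i = i₀ then massd else mass) (T i) := by
      intro T
      rw [Finset.sum_mul]
      refine Finset.sum_congr rfl fun i₀ _ => ?_
      have hR : (∏ i, (if i = i₀ then massd else mass) (T i))
          = massd (T i₀) * ∏ i ∈ Finset.univ.erase i₀, mass (T i) := by
        rw [← Finset.mul_prod_erase Finset.univ
          (fun i => (if i = i₀ then massd else mass) (T i)) (Finset.mem_univ i₀), if_pos rfl]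
        congr 1
        exact Finset.prod_congr rfl (fun i hi => by rw [if_neg (Finset.ne_of_mem_erase hi)])
      have hL : (∏ i, mass (T i))
          = mass (T i₀) * ∏ i ∈ Finset.univ.erase i₀, mass (T i) :=
        (Finset.mul_prod_erase Finset.univ (fun i => mass (T i)) (Finset.mem_univ i₀)).symm
      rw [hR, hL]
      simp only [hmassddef]
      ring
    constructor
    · have h9 : Summable fun T : Fin k → ℕ × ℕ =>
          ∑ i₀, ∏ i, (if i = i₀ then massd else mass) (T i) :=
        summable_sum (fun i₀ _ => (key i₀).1)
      exact h9.congr (fun T => (hpt T).symm)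
    · rw [tsum_congr hpt, Summable.tsum_finsetSum (fun i₀ _ => (key i₀).1)]
      rw [Finset.sum_congr rfl (fun i₀ _ => (key i₀).2), Finset.sum_const,
        Finset.card_univ, Fintype.card_fin, nsmul_eq_mul]
  
  have hW_bound : ∀ (k : ℕ) (T : Fin k → ℕ × ℕ),
      |∑ c, u c * ∏ i, F c (T i)| ≤
        ((∑ i, ((T i).1 : ℝ)) * ∏ i, mass (T i) + ∏ i, mass0 (T i)) * Real.sqrt s := by
    intro k T
    set m : ℕ := ∑ i, (T i).1 with hmdef
    have hcast : (∑ i, ((T i).1 : ℝ)) = (m : ℝ) := by rw [hmdef]; push_cast; rfl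
    let γ : ((i : Fin k) × Fin (T i).1) → EuclideanSpace ℝ (Fin d) :=
      fun q => βh (T q.1).1 (T q.1).2 q.2
    have hcard : Fintype.card ((i : Fin k) × Fin (T i).1) = m := by
      rw [Fintype.card_sigma, hmdef]
      exact Finset.sum_congr rfl fun i _ => Fintype.card_fin _
    have hsig : ∀ c, (∏ q : (i : Fin k) × Fin (T i).1, (⟪γ q, x c⟫ : ℝ))
        = ∏ i, ∏ j : Fin (T i).1, (⟪βh (T i).1 (T i).2 j, x c⟫ : ℝ) := by
      intro c
      rw [← Finset.univ_sigma_univ, Finset.prod_sigma]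
    have hsignorm : (∏ q : (i : Fin k) × Fin (T i).1, ‖γ q‖)
        = ∏ i, ∏ j : Fin (T i).1, ‖βh (T i).1 (T i).2 j‖ := by
      rw [← Finset.univ_sigma_univ, Finset.prod_sigma]
    have hsplit : ∀ c, (∏ i, F c (T i))
        = (∏ i, ah (T i).1 (T i).2) * ∏ q : (i : Fin k) × Fin (T i).1, (⟪γ q, x c⟫ : ℝ) := by
      intro c
      rw [hsig c]
      show (∏ i, ah (T i).1 (T i).2 * ∏ j : Fin (T i).1, (⟪βh (T i).1 (T i).2 j, x c⟫ : ℝ)) = _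
      rw [Finset.prod_mul_distrib]
    have hW : (∑ c, u c * ∏ i, F c (T i))
        = (∏ i, ah (T i).1 (T i).2) * ∑ c, u c * ∏ q : (i : Fin k) × Fin (T i).1, (⟪γ q, x c⟫ : ℝ) := by
      rw [Finset.mul_sum]
      exact Finset.sum_congr rfl fun c _ => by rw [hsplit c]; ring
    have hmono := monomial_bound x u ((i : Fin k) × Fin (T i).1) γ
    rw [hcard] at hmono
    have hQm : (∑ c, ∑ c', u c * u c' * (⟪x c, x c'⟫ : ℝ) ^ m) = Q m := rfl
    rw [hQm] at hmono
    have hmassprod : |∏ i, ah (T i).1 (T i).2| * (∏ q : (i : Fin k) × Fin (T i).1, ‖γ q‖)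
        = ∏ i, mass (T i) := by
      rw [Finset.abs_prod, hsignorm, ← Finset.prod_mul_distrib]
    have hind : (if m = 0 then (1:ℝ) else 0) * ∏ i, mass (T i) = ∏ i, mass0 (T i) := by
      by_cases h : m = 0
      · rw [if_pos h, one_mul]
        have hall : ∀ i, (T i).1 = 0 := by
          intro i
          have h0 : ∑ i, (T i).1 = 0 := by rw [← hmdef]; exact h
          exact (Finset.sum_eq_zero_iff.mp h0) i (Finset.mem_univ i)
        exact Finset.prod_congr rfl fun i _ => by simp [hmass0def, hall i]
      · rw [if_neg h, zero_mul]
        have hex : ∃ i, (T i).1 ≠ 0 := by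
          by_contra hc
          push_neg at hc
          exact h (by rw [hmdef]; exact Finset.sum_eq_zero (fun i _ => hc i))
        obtain ⟨i, hi⟩ := hex
        exact (Finset.prod_eq_zero (Finset.mem_univ i) (by simp [hmass0def, hi])).symm
    have hprodmass_nonneg : (0:ℝ) ≤ ∏ i, mass (T i) :=
      Finset.prod_nonneg fun i _ => hmass_nonneg (T i)
    calc |∑ c, u c * ∏ i, F c (T i)|
        = |∏ i, ah (T i).1 (T i).2| * |∑ c, u c * ∏ q : (i : Fin k) × Fin (T i).1, (⟪γ q, x c⟫ : ℝ)| := by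
          rw [hW, abs_mul]
      _ ≤ |∏ i, ah (T i).1 (T i).2| *
            ((∏ q : (i : Fin k) × Fin (T i).1, ‖γ q‖) * Real.sqrt (Q m)) :=
          mul_le_mul_of_nonneg_left hmono (abs_nonneg _)
      _ = (∏ i, mass (T i)) * Real.sqrt (Q m) := by rw [← hmassprod]; ring
      _ ≤ (∏ i, mass (T i)) * (((m : ℝ) + if m = 0 then 1 else 0) * Real.sqrt s) :=
          mul_le_mul_of_nonneg_left (hsqrtQ m) hprodmass_nonneg
      _ = ((m : ℝ) * ∏ i, mass (T i) + (if m = 0 then (1:ℝ) else 0) * ∏ i, mass (T i)) * Real.sqrt s := by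
          ring
      _ = ((∑ i, ((T i).1 : ℝ)) * ∏ i, mass (T i) + ∏ i, mass0 (T i)) * Real.sqrt s := by
          rw [hind, hcast]
  
  have hBk : ∀ k : ℕ, |∑ c, u c * (familyFun d ah βh (x c)) ^ k|
      ≤ ((k : ℝ) * (h1t' * h1t ^ (k - 1)) + (auxCoef d ah βh 0) ^ k) * Real.sqrt s := by
    intro k
    have hexp : ∀ c, (familyFun d ah βh (x c)) ^ k = ∑' T : Fin k → ℕ × ℕ, ∏ i, F c (T i) := by
      intro c
      obtain ⟨hsum, heq⟩ := pi_prod_tsum k (fun _ => F c) (fun _ => hF_abs_summable c)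
      rw [hfam c, heq, Finset.prod_const, Finset.card_univ, Fintype.card_fin]
    have hb1 : Summable (fun T : Fin k → ℕ × ℕ =>
        ((∑ i, ((T i).1 : ℝ)) * ∏ i, mass (T i) + ∏ i, mass0 (T i)) * Real.sqrt s) :=
      (((hdeg k).1).add ((hprod_mass0 k).1.of_abs)).mul_right _
    have habsW : Summable fun T : Fin k → ℕ × ℕ => |∑ c, u c * ∏ i, F c (T i)| :=
      hb1.of_nonneg_of_le (fun T => abs_nonneg _) (fun T => hW_bound k T)
    have hswap : (∑ c, u c * (familyFun d ah βh (x c)) ^ k)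
        = ∑' T : Fin k → ℕ × ℕ, ∑ c, u c * ∏ i, F c (T i) := by
      calc ∑ c, u c * (familyFun d ah βh (x c)) ^ k
          = ∑ c, ∑' T : Fin k → ℕ × ℕ, u c * ∏ i, F c (T i) := by
            refine Finset.sum_congr rfl fun c _ => ?_
            rw [hexp c, tsum_mul_left]
        _ = ∑' T : Fin k → ℕ × ℕ, ∑ c, u c * ∏ i, F c (T i) := by
            refine (Summable.tsum_finsetSum (fun c _ => ?_)).symm
            exact ((pi_prod_tsum k (fun _ => F c) (fun _ => hF_abs_summable c)).1.of_abs).mul_left _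
    have hnorm : Summable fun T : Fin k → ℕ × ℕ => ‖∑ c, u c * ∏ i, F c (T i)‖ := by
      simpa only [Real.norm_eq_abs] using habsW
    calc |∑ c, u c * (familyFun d ah βh (x c)) ^ k|
        = |∑' T : Fin k → ℕ × ℕ, ∑ c, u c * ∏ i, F c (T i)| := by rw [hswap]
      _ ≤ ∑' T : Fin k → ℕ × ℕ, |∑ c, u c * ∏ i, F c (T i)| := by
          have h11 := norm_tsum_le_tsum_norm hnorm
          simpa only [Real.norm_eq_abs] using h11
      _ ≤ ∑' T : Fin k → ℕ × ℕ,
            ((∑ i, ((T i).1 : ℝ)) * ∏ i, mass (T i) + ∏ i, mass0 (T i)) * Real.sqrt s :=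
          Summable.tsum_le_tsum (fun T => hW_bound k T) habsW hb1
      _ = ((k : ℝ) * (h1t' * h1t ^ (k - 1)) + (auxCoef d ah βh 0) ^ k) * Real.sqrt s := by
          rw [tsum_mul_right]
          congr 1
          rw [Summable.tsum_add (hdeg k).1 ((hprod_mass0 k).1.of_abs), (hdeg k).2, (hprod_mass0 k).2]
  
  have hsummak : ∀ c, Summable fun k : ℕ => a k * (familyFun d ah βh (x c)) ^ k := by
    intro c
    apply Summable.of_abs
    apply hr2.of_nonneg_of_le (fun k => abs_nonneg _)
    intro k
    rw [abs_mul, abs_pow]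
    apply mul_le_mul_of_nonneg_left _ (abs_nonneg _)
    calc |familyFun d ah βh (x c)| ^ k ≤ h1t ^ k :=
          pow_le_pow_left₀ (abs_nonneg _) (hfam_le c) k
      _ ≤ r ^ k := pow_le_pow_left₀ h1t_nonneg (le_of_lt hrlt) k
  have hs_series : s = ∑' k : ℕ, a k * ∑ c, u c * (familyFun d ah βh (x c)) ^ k := by
    have hsy : s = ∑ c, u c * y c := by
      have h0 : s = y ⬝ᵥ u := by rw [hs, hu]
      rw [h0]
      simp only [dotProduct]
      exact Finset.sum_congr rfl fun c _ => mul_comm _ _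
    rw [hsy]
    calc ∑ c, u c * y c
        = ∑ c, ∑' k : ℕ, u c * (a k * (familyFun d ah βh (x c)) ^ k) := by
          refine Finset.sum_congr rfl fun c _ => ?_
          rw [hy c, tsum_mul_left]
      _ = ∑' k : ℕ, ∑ c, u c * (a k * (familyFun d ah βh (x c)) ^ k) :=
          (Summable.tsum_finsetSum (fun c _ => (hsummak c).mul_left _)).symm
      _ = ∑' k : ℕ, a k * ∑ c, u c * (familyFun d ah βh (x c)) ^ k := by
          apply tsum_congr
          intro k
          rw [Finset.mul_sum]
          exact Finset.sum_congr rfl fun c _ => by ring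
  have hsummain : Summable fun k : ℕ => (k : ℝ) * |a k| * h1t ^ (k - 1) := by
    have hq0 : 0 ≤ h1t / r := div_nonneg h1t_nonneg hr_pos.le
    have hq1 : h1t / r < 1 := (div_lt_one hr_pos).mpr hrlt
    have hgeo := (summable_k_mul_pow hq0 hq1).mul_left ((∑' j : ℕ, |a j| * r ^ j) / r)
    apply hgeo.of_nonneg_of_le
    · intro k
      exact mul_nonneg (mul_nonneg (Nat.cast_nonneg k) (abs_nonneg _)) (pow_nonneg h1t_nonneg _)
    · intro k
      rcases Nat.eq_zero_or_pos k with h | h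
      · subst h; simp
      · have hCnn : (0:ℝ) ≤ ∑' j : ℕ, |a j| * r ^ j :=
          tsum_nonneg (fun j => mul_nonneg (abs_nonneg _) (pow_nonneg hr_pos.le _))
        have hak : |a k| * r ^ k ≤ ∑' j : ℕ, |a j| * r ^ j :=
          Summable.le_tsum hr2 k (fun j _ => mul_nonneg (abs_nonneg _) (pow_nonneg hr_pos.le _))
        have hrk : (0:ℝ) < r ^ k := pow_pos hr_pos k
        have h10 : |a k| ≤ (∑' j : ℕ, |a j| * r ^ j) / r ^ k := by
          rw [le_div_iff₀ hrk]
          exact hak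
        have hk1 : k - 1 + 1 = k := Nat.succ_pred_eq_of_pos h
        have hrsplit : r ^ k = r ^ (k - 1) * r := by rw [← pow_succ, hk1]
        have hrk1 : (0:ℝ) < r ^ (k - 1) := pow_pos hr_pos _
        calc (k : ℝ) * |a k| * h1t ^ (k - 1)
            ≤ (k : ℝ) * ((∑' j : ℕ, |a j| * r ^ j) / r ^ k) * h1t ^ (k - 1) := by
              apply mul_le_mul_of_nonneg_right _ (pow_nonneg h1t_nonneg _)
              exact mul_le_mul_of_nonneg_left h10 (Nat.cast_nonneg k)
          _ = (∑' j : ℕ, |a j| * r ^ j) / r * ((k : ℝ) * (h1t / r) ^ (k - 1)) := by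
              rw [div_pow, hrsplit]
              field_simp
  have haux0le : auxCoef d ah βh 0 ≤ h1t := by
    rw [hh1t]
    exact Summable.le_tsum hh1 0 (fun j _ => haux_nonneg j)
  have hsum0 : Summable fun k : ℕ => |a k| * (auxCoef d ah βh 0) ^ k := by
    apply hr2.of_nonneg_of_le
    · intro k
      exact mul_nonneg (abs_nonneg _) (pow_nonneg (haux_nonneg 0) _)
    · intro k
      apply mul_le_mul_of_nonneg_left _ (abs_nonneg _)
      exact pow_le_pow_left₀ (haux_nonneg 0) (le_trans haux0le hrlt.le) k
  have hDsum : Summable fun k : ℕ =>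
      |a k| * (((k : ℝ) * (h1t' * h1t ^ (k - 1)) + (auxCoef d ah βh 0) ^ k) * Real.sqrt s) := by
    have h1 := (hsummain.mul_right (h1t' * Real.sqrt s)).add (hsum0.mul_right (Real.sqrt s))
    apply h1.congr
    intro k
    ring
  have habsB : Summable fun k : ℕ => |a k * ∑ c, u c * (familyFun d ah βh (x c)) ^ k| := by
    apply hDsum.of_nonneg_of_le (fun k => abs_nonneg _)
    intro k
    rw [abs_mul]
    exact mul_le_mul_of_nonneg_left (hBk k) (abs_nonneg _)
  have hsM : s ≤ M * Real.sqrt s := by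
    have hnormB : Summable fun k : ℕ => ‖a k * ∑ c, u c * (familyFun d ah βh (x c)) ^ k‖ := by
      simpa only [Real.norm_eq_abs] using habsB
    calc s = |s| := (abs_of_nonneg hs_nonneg).symm
      _ = |∑' k : ℕ, a k * ∑ c, u c * (familyFun d ah βh (x c)) ^ k| := by rw [← hs_series]
      _ ≤ ∑' k : ℕ, |a k * ∑ c, u c * (familyFun d ah βh (x c)) ^ k| := by
          have h11 := norm_tsum_le_tsum_norm hnormB
          simpa only [Real.norm_eq_abs] using h11
      _ ≤ ∑' k : ℕ, |a k| * (((k : ℝ) * (h1t' * h1t ^ (k - 1)) + (auxCoef d ah βh 0) ^ k) * Real.sqrt s) := by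
          refine Summable.tsum_le_tsum (fun k => ?_) habsB hDsum
          rw [abs_mul]
          exact mul_le_mul_of_nonneg_left (hBk k) (abs_nonneg _)
      _ = M * Real.sqrt s := by
          have h12 : (fun k : ℕ => |a k| * (((k : ℝ) * (h1t' * h1t ^ (k - 1)) + (auxCoef d ah βh 0) ^ k) * Real.sqrt s))
              = fun k : ℕ => ((k : ℝ) * |a k| * h1t ^ (k - 1)) * (h1t' * Real.sqrt s)
                + (|a k| * (auxCoef d ah βh 0) ^ k) * Real.sqrt s := by
            funext k
            ring
          rw [h12, Summable.tsum_add (hsummain.mul_right _) (hsum0.mul_right _),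
            tsum_mul_right, tsum_mul_right, hM]
          ring
  have hM_nonneg : 0 ≤ M := by
    rw [hM]
    apply add_nonneg
    · apply mul_nonneg _ h1t'_nonneg
      exact tsum_nonneg (fun k => mul_nonneg (mul_nonneg (Nat.cast_nonneg k) (abs_nonneg _))
        (pow_nonneg h1t_nonneg _))
    · exact tsum_nonneg (fun k => mul_nonneg (abs_nonneg _) (pow_nonneg (haux_nonneg 0) _))
  show Real.sqrt s ≤ M
  rcases eq_or_lt_of_le (Real.sqrt_nonneg s) with h | h
  · rw [← h]
    exact hM_nonneg
  · have h2 : Real.sqrt s * Real.sqrt s ≤ M * Real.sqrt s := by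
      rw [Real.mul_self_sqrt hs_nonneg]
      exact hsM
    exact le_of_mul_le_mul_right h2 h
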